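/- arXiv:2212.13601 — 2 statements merged into one kernel-verified Lean document; each statement's English description precedes it below -/
import Mathlib

section
/- For 0 < q < 1 and -1 < α < q, the discrete measure ρ_{q,α} = (-α;q)_∞ (q;q)_∞ ∑_{n=0}^∞ (q^n/(q;q)_n) h_n(-α q^{-1}|q) δ_{(1-q)^{-1/2} q^{n/2}} solves the moment problem ∫_0^∞ r^{2m} dρ_{q,α}(r) = (-α;q)_m [m]_q! for every natural number m, where h_n(z|q) = ∑_{k=0}^n ((q;q)_n/((q;q)_k (q;q)_{n-k})) z^k are the Rogers–Szegő polynomials. -/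
/-- q-Pochhammer symbol `(a;q)_n`. -/
noncomputable def qPoch (a q : ℝ) (n : ℕ) : ℝ := ∏ j ∈ Finset.range n, (1 - a * q ^ j)

/-- infinite q-Pochhammer symbol `(a;q)_∞`. -/
noncomputable def qPochInf (a q : ℝ) : ℝ := ∏' j : ℕ, (1 - a * q ^ j)

/-- q-factorial `[m]_q!`. -/
noncomputable def qFact (q : ℝ) (m : ℕ) : ℝ :=
  ∏ k ∈ Finset.range m, ((1 - q ^ (k + 1)) / (1 - q))

/-- Rogers–Szegő polynomial `h_n(z|q)`. -/
noncomputable def rogersSzego (q : ℝ) (n : ℕ) (z : ℝ) : ℝ :=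
  ∑ k ∈ Finset.range (n + 1),
    (qPoch q q n / (qPoch q q k * qPoch q q (n - k))) * z ^ k

open Finset Filter
set_option maxHeartbeats 1000000

lemma qPoch_succ (a q : ℝ) (n : ℕ) : qPoch a q (n + 1) = qPoch a q n * (1 - a * q ^ n) :=
  Finset.prod_range_succ _ _

lemma qPoch_pos {q : ℝ} (hq : 0 ≤ q) (hq1 : q < 1) (n : ℕ) : 0 < qPoch q q n := by
  apply Finset.prod_pos
  intro j _
  have h1 : q ^ (j+1) < 1 := pow_lt_one₀ hq hq1 (Nat.succ_ne_zero j)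
  have : q * q ^ j = q ^ (j+1) := (pow_succ' q j).symm
  nlinarith

lemma qPoch_fac_pos {q x : ℝ} (hq : 0 ≤ q) (hq1 : q < 1) (hx : |x| < 1) (j : ℕ) :
    0 < 1 - x * q ^ j := by
  have h1 : |x * q ^ j| < 1 := by
    rw [abs_mul, abs_pow, abs_of_nonneg hq]
    calc |x| * q ^ j ≤ |x| * 1 := by
          apply mul_le_mul_of_nonneg_left _ (abs_nonneg x)
          exact pow_le_one₀ hq hq1.le
      _ < 1 := by simpa using hx
  have := (abs_lt.mp h1).2
  linarith

/-- Summability of the q-exponential series. -/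
lemma summableE {q : ℝ} (hq : 0 < q) (hq1 : q < 1) {x : ℝ} (hx : |x| < 1) :
    Summable (fun n : ℕ => x ^ n / qPoch q q n) := by
  rcases eq_or_ne x 0 with rfl | hx0
  · apply summable_of_ne_finset_zero (s := {0})
    intro n hn
    simp only [Finset.mem_singleton] at hn
    simp [zero_pow hn]
  · apply summable_of_ratio_test_tendsto_lt_one hx
    · filter_upwards with n
      exact div_ne_zero (pow_ne_zero n hx0) (qPoch_pos hq.le hq1 n).ne'
    · have heq : ∀ n : ℕ, ‖x ^ (n+1) / qPoch q q (n+1)‖ / ‖x ^ n / qPoch q q n‖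
          = |x| / (1 - q * q ^ n) := by
        intro n
        have hp := qPoch_pos hq.le hq1 n
        have hp1 := qPoch_pos hq.le hq1 (n+1)
        have hfac : (0:ℝ) < 1 - q * q ^ n := qPoch_fac_pos hq.le hq1 (by rwa [abs_of_pos hq]) n
        rw [Real.norm_eq_abs, Real.norm_eq_abs, abs_div, abs_div, abs_pow, abs_pow,
          abs_of_pos hp, abs_of_pos hp1, qPoch_succ, pow_succ]
        field_simp
      simp_rw [heq]
      have h0 : Tendsto (fun n : ℕ => q * q ^ n) atTop (nhds 0) := by
        simpa using (tendsto_pow_atTop_nhds_zero_of_lt_one hq.le hq1).const_mul q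
      have : Tendsto (fun n : ℕ => |x| / (1 - q * q ^ n)) atTop (nhds (|x| / (1 - 0))) :=
        tendsto_const_nhds.div (tendsto_const_nhds.sub h0) (by norm_num)
      simpa using this

lemma euler_funeq {q : ℝ} (hq : 0 < q) (hq1 : q < 1) {x : ℝ} (hx : |x| < 1) :
    ∑' n : ℕ, x ^ n / qPoch q q n
      = (∑' n : ℕ, (q * x) ^ n / qPoch q q n) + x * ∑' n : ℕ, x ^ n / qPoch q q n := by
  have hqx : |q * x| < 1 := by
    rw [abs_mul, abs_of_pos hq]
    calc q * |x| ≤ 1 * |x| := by nlinarith [abs_nonneg x]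
      _ < 1 := by simpa using hx
  have hS := summableE hq hq1 hx
  have hSq := summableE hq hq1 hqx
  -- shift sums
  have h1 : ∑' n : ℕ, x ^ n / qPoch q q n = 1 + ∑' n : ℕ, x ^ (n+1) / qPoch q q (n+1) := by
    rw [Summable.tsum_eq_zero_add hS]
    simp [qPoch]
  have h2 : ∑' n : ℕ, (q*x) ^ n / qPoch q q n = 1 + ∑' n : ℕ, (q*x) ^ (n+1) / qPoch q q (n+1) := by
    rw [Summable.tsum_eq_zero_add hSq]
    simp [qPoch]
  have h3 : x * ∑' n : ℕ, x ^ n / qPoch q q n = ∑' n : ℕ, x ^ (n+1) / qPoch q q n := by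
    rw [← tsum_mul_left]
    congr 1; ext n; rw [pow_succ]; ring
  rw [h3, h1, h2]
  have hS' : Summable (fun n : ℕ => (q*x) ^ (n+1) / qPoch q q (n+1)) :=
    (summable_nat_add_iff 1).mpr hSq
  have hS'' : Summable (fun n : ℕ => x ^ (n+1) / qPoch q q n) := by
    have := hS.mul_left x
    apply this.congr
    intro n; rw [pow_succ]; ring
  rw [add_assoc]
  congr 1
  rw [← Summable.tsum_add hS' hS'']
  apply tsum_congr
  intro n
  have hp := (qPoch_pos hq.le hq1 n).ne'
  have hfac := (qPoch_fac_pos hq.le hq1 (by rwa [abs_of_pos hq]) n : (0:ℝ) < 1 - q * q ^ n).ne'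
  rw [qPoch_succ]
  field_simp
  ring

lemma euler_partial {q : ℝ} (hq : 0 < q) (hq1 : q < 1) {x : ℝ} (hx : |x| < 1) (N : ℕ) :
    qPoch x q N * ∑' n : ℕ, x ^ n / qPoch q q n = ∑' n : ℕ, (q ^ N * x) ^ n / qPoch q q n := by
  induction N with
  | zero => simp [qPoch]
  | succ N ih =>
    have hy : |q ^ N * x| < 1 := by
      rw [abs_mul, abs_pow, abs_of_pos hq]
      calc q ^ N * |x| ≤ 1 * |x| := by
            apply mul_le_mul_of_nonneg_right (pow_le_one₀ hq.le hq1.le) (abs_nonneg x)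
        _ < 1 := by simpa using hx
    have := euler_funeq hq hq1 hy
    have key : ∑' n : ℕ, (q ^ (N+1) * x) ^ n / qPoch q q n
        = (1 - q ^ N * x) * ∑' n : ℕ, (q ^ N * x) ^ n / qPoch q q n := by
      have harg : (fun n : ℕ => (q * (q ^ N * x)) ^ n / qPoch q q n)
          = fun n : ℕ => (q ^ (N+1) * x) ^ n / qPoch q q n := by
        ext n; rw [← mul_assoc, ← pow_succ']
      rw [harg] at this
      linarith [this]
    rw [key, qPoch_succ, ← ih]
    ring

lemma euler_tendsto {q : ℝ} (hq : 0 < q) (hq1 : q < 1) {x : ℝ} (hx : |x| < 1) :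
    Tendsto (fun N : ℕ => ∑' n : ℕ, (q ^ N * x) ^ n / qPoch q q n) atTop (nhds 1) := by
  have habs : |(|x|)| < 1 := by rwa [abs_abs]
  have hSabs := summableE hq hq1 habs
  set C : ℝ := (∑' n : ℕ, |x| ^ n / qPoch q q n) * (|x| / (1-q)) with hC
  have key : ∀ N : ℕ, |(∑' n : ℕ, (q ^ N * x) ^ n / qPoch q q n) - 1| ≤ C * q ^ N := by
    intro N
    have hyx : |q ^ N * x| ≤ |x| := by
      rw [abs_mul, abs_pow, abs_of_pos hq]
      calc q ^ N * |x| ≤ 1 * |x| :=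
          mul_le_mul_of_nonneg_right (pow_le_one₀ hq.le hq1.le) (abs_nonneg x)
        _ = |x| := one_mul _
    have hy : |q ^ N * x| < 1 := lt_of_le_of_lt hyx hx
    have hSy := summableE hq hq1 hy
    have h1 : (∑' n : ℕ, (q ^ N * x) ^ n / qPoch q q n) - 1
        = ∑' n : ℕ, (q ^ N * x) ^ (n+1) / qPoch q q (n+1) := by
      rw [Summable.tsum_eq_zero_add hSy]
      simp [qPoch]
    rw [h1]
    have hS1 : Summable (fun n : ℕ => (q ^ N * x) ^ (n+1) / qPoch q q (n+1)) :=
      (summable_nat_add_iff 1).mpr hSy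
    have hS2 : Summable (fun n : ℕ => (|x| ^ n / qPoch q q n) * (|x| * q ^ N / (1-q))) :=
      hSabs.mul_right _
    calc |∑' n : ℕ, (q ^ N * x) ^ (n+1) / qPoch q q (n+1)|
        ≤ ∑' n : ℕ, |(q ^ N * x) ^ (n+1) / qPoch q q (n+1)| := by
          have h := norm_tsum_le_tsum_norm (f := fun n : ℕ => (q ^ N * x) ^ (n+1) / qPoch q q (n+1)) (by simp only [Real.norm_eq_abs]; exact hS1.abs)
          simpa only [Real.norm_eq_abs] using h
      _ ≤ ∑' n : ℕ, (|x| ^ n / qPoch q q n) * (|x| * q ^ N / (1-q)) := by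
          apply Summable.tsum_le_tsum _ hS1.abs hS2
          intro n
          have hp := qPoch_pos hq.le hq1 n
          have hp1 := qPoch_pos hq.le hq1 (n+1)
          rw [abs_div, abs_pow, abs_of_pos hp1, qPoch_succ]
          have hfac : 1 - q ≤ 1 - q * q ^ n := by
            have : q * q ^ n ≤ q := by nlinarith [pow_le_one₀ hq.le hq1.le (n := n), pow_nonneg hq.le n]
            linarith
          have hfac0 : (0:ℝ) < 1 - q := by linarith
          have hnum : |q ^ N * x| ^ (n+1) ≤ |x| ^ n * (|x| * q ^ N) := by
            calc |q ^ N * x| ^ (n+1) = |q ^ N * x| ^ n * |q ^ N * x| := pow_succ _ _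
              _ ≤ |x| ^ n * (|x| * q ^ N) := by
                  apply mul_le_mul (pow_le_pow_left₀ (abs_nonneg _) hyx n) _ (abs_nonneg _)
                    (pow_nonneg (abs_nonneg _) n)
                  rw [abs_mul, abs_pow, abs_of_pos hq]; ring_nf; exact le_refl _
          calc |q ^ N * x| ^ (n+1) / (qPoch q q n * (1 - q * q ^ n))
              ≤ (|x| ^ n * (|x| * q ^ N)) / (qPoch q q n * (1 - q)) := by
                apply div_le_div₀ (by positivity) hnum (by positivity)
                exact mul_le_mul_of_nonneg_left hfac hp.le
            _ = (|x| ^ n / qPoch q q n) * (|x| * q ^ N / (1-q)) := by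
                field_simp
      _ = C * q ^ N := by
          rw [tsum_mul_right, hC]
          field_simp
  have hlim : Tendsto (fun N : ℕ => C * q ^ N) atTop (nhds 0) := by
    simpa using (tendsto_pow_atTop_nhds_zero_of_lt_one hq.le hq1).const_mul C
  rw [tendsto_iff_norm_sub_tendsto_zero]
  apply squeeze_zero (fun N => norm_nonneg _) _ hlim
  intro N
  rw [Real.norm_eq_abs]
  exact key N

lemma abs_log_le {u c : ℝ} (hc : c < 1) (hu : |u| ≤ c) :
    |Real.log (1 + u)| ≤ |u| / (1 - c) := by
  have hc0 : 0 ≤ c := le_trans (abs_nonneg u) hu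
  have h1c : (0:ℝ) < 1 - c := by linarith
  have hul := (abs_le.mp hu).1
  have huu := (abs_le.mp hu).2
  have hpos : 0 < 1 + u := by linarith
  rw [abs_le]
  constructor
  · have hlog : Real.log (1+u)⁻¹ ≤ (1+u)⁻¹ - 1 := Real.log_le_sub_one_of_pos (by positivity)
    rw [Real.log_inv] at hlog
    have h2 : (1+u)⁻¹ - 1 = -u/(1+u) := by field_simp; ring
    have h3 : -u/(1+u) ≤ |u|/(1-c) :=
      div_le_div₀ (abs_nonneg u) (neg_le_abs u) h1c (by linarith)
    linarith
  · have h4 : Real.log (1+u) ≤ u := by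
      have := Real.log_le_sub_one_of_pos hpos
      linarith
    have h5 : u ≤ |u| := le_abs_self u
    have h6 : |u| ≤ |u|/(1-c) := by
      rw [le_div_iff₀ h1c]
      nlinarith [abs_nonneg u]
    linarith

lemma multipliableQ {q : ℝ} (hq : 0 < q) (hq1 : q < 1) {x : ℝ} (hx : |x| < 1) :
    Multipliable (fun j : ℕ => 1 - x * q ^ j) := by
  apply Real.multipliable_of_summable_log (f := fun j => 1 - x * q ^ j)
  · intro j
    exact qPoch_fac_pos hq.le hq1 hx j
  · apply Summable.of_norm_bounded (g := fun j => (|x| / (1 - |x|)) * q ^ j)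
      (((summable_geometric_of_lt_one hq.le hq1)).mul_left _)
    intro j
    have hu : |(-(x * q ^ j))| ≤ |x| := by
      rw [abs_neg, abs_mul, abs_pow, abs_of_pos hq]
      calc |x| * q ^ j ≤ |x| * 1 :=
          mul_le_mul_of_nonneg_left (pow_le_one₀ hq.le hq1.le) (abs_nonneg x)
        _ = |x| := mul_one _
    have key := abs_log_le hx hu
    have harg : 1 + -(x * q ^ j) = 1 - x * q ^ j := by ring
    rw [harg] at key
    rw [Real.norm_eq_abs]
    calc |Real.log (1 - x * q ^ j)| ≤ |(-(x * q ^ j))| / (1 - |x|) := key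
      _ = |x| * q ^ j / (1 - |x|) := by
          rw [abs_neg, abs_mul, abs_pow, abs_of_pos hq]
      _ = |x| / (1 - |x|) * q ^ j := by ring

lemma abs_xqpow_lt {q x : ℝ} (hq : 0 < q) (hq1 : q < 1) (hx : |x| < 1) (m : ℕ) :
    |x * q ^ m| < 1 := by
  rw [abs_mul, abs_pow, abs_of_pos hq]
  calc |x| * q ^ m ≤ |x| * 1 :=
      mul_le_mul_of_nonneg_left (pow_le_one₀ hq.le hq1.le) (abs_nonneg x)
    _ < 1 := by simpa using hx

/-- Euler's identity: `(x;q)_∞ · ∑ x^n/(q;q)_n = 1`. -/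
lemma euler_prod {q : ℝ} (hq : 0 < q) (hq1 : q < 1) {x : ℝ} (hx : |x| < 1) :
    qPochInf x q * ∑' n : ℕ, x ^ n / qPoch q q n = 1 := by
  have hm := multipliableQ hq hq1 hx
  have h1 : Tendsto (fun N : ℕ => qPoch x q N) atTop (nhds (qPochInf x q)) :=
    hm.hasProd.tendsto_prod_nat
  have h2 := h1.mul_const (∑' n : ℕ, x ^ n / qPoch q q n)
  have h3 : Tendsto (fun N : ℕ => qPoch x q N * ∑' n : ℕ, x ^ n / qPoch q q n)
      atTop (nhds 1) := by
    have := euler_tendsto hq hq1 hx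
    apply this.congr
    intro N
    exact (euler_partial hq hq1 hx N).symm
  exact tendsto_nhds_unique h2 h3

/-- Splitting off the first `m` factors of the infinite product. -/
lemma euler_split {q : ℝ} (hq : 0 < q) (hq1 : q < 1) {x : ℝ} (hx : |x| < 1) (m : ℕ) :
    qPochInf x q = qPoch x q m * qPochInf (x * q ^ m) q := by
  have hm : Multipliable (fun n : ℕ => 1 - x * q ^ (n + m)) := by
    apply (multipliableQ hq hq1 (abs_xqpow_lt hq hq1 hx m)).congr
    intro n
    rw [pow_add]; ring
  have key := Multipliable.prod_mul_tprod_nat_mul' (f := fun j : ℕ => 1 - x * q ^ j) (k := m) hm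
  rw [qPochInf, ← key, qPoch]
  congr 1
  rw [qPochInf]
  apply tprod_congr
  intro i
  show 1 - x * q ^ (i + m) = 1 - x * q ^ m * q ^ i
  rw [pow_add]; ring


/-- The discrete measure `ρ_{q,α}` supported at the points `(1-q)^{-1/2} q^{n/2}` with
weights `(-α;q)_∞ (q;q)_∞ (q^n/(q;q)_n) h_n(-α/q|q)` solves the moment problem
`∫ r^{2m} ρ_{q,α}(dr) = (-α;q)_m [m]_q!`. -/
theorem moment_problem_solution (q α : ℝ) (hq : 0 < q) (hq1 : q < 1)
    (hα : -1 < α) (hαq : α < q) (m : ℕ) :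
    Summable (fun n : ℕ =>
        (q ^ n / qPoch q q n) * rogersSzego q n (-α / q) *
          ((Real.sqrt (1 - q))⁻¹ * Real.sqrt q ^ n) ^ (2 * m)) ∧
    qPochInf (-α) q * qPochInf q q *
        ∑' n : ℕ, (q ^ n / qPoch q q n) * rogersSzego q n (-α / q) *
          ((Real.sqrt (1 - q))⁻¹ * Real.sqrt q ^ n) ^ (2 * m)
      = qPoch (-α) q m * qFact q m := by
  have h1q : (0:ℝ) < 1 - q := by linarith
  have hαabs : |(-α)| < 1 := by rw [abs_neg, abs_lt]; constructor <;> [linarith; linarith]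
  have hA : |(-α) * q ^ m| < 1 := abs_xqpow_lt hq hq1 hαabs m
  have hqm1 : |q ^ (m+1)| < 1 := by
    rw [abs_pow, abs_of_pos hq]
    exact pow_lt_one₀ hq.le hq1 (Nat.succ_ne_zero m)
  -- the two factor sequences of the Cauchy product
  set f : ℕ → ℝ := fun k => ((-α) * q ^ m) ^ k / qPoch q q k with hf
  set g : ℕ → ℝ := fun j => (q ^ (m+1)) ^ j / qPoch q q j with hg
  have hfn : Summable (fun k => ‖f k‖) := by
    have := summableE hq hq1 (x := |(-α) * q ^ m|) (by rwa [abs_abs])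
    apply this.congr
    intro k
    rw [hf, Real.norm_eq_abs, abs_div, abs_pow, abs_of_pos (qPoch_pos hq.le hq1 k)]
  have hgn : Summable (fun j => ‖g j‖) := by
    have := summableE hq hq1 (x := |q ^ (m+1)|) (by rwa [abs_abs])
    apply this.congr
    intro j
    rw [hg, Real.norm_eq_abs, abs_div, abs_pow (q ^ (m+1)), abs_of_pos (qPoch_pos hq.le hq1 j)]
  -- identify the summand with the Cauchy product term
  have hsummand : ∀ n : ℕ,
      (q ^ n / qPoch q q n) * rogersSzego q n (-α / q) *
        ((Real.sqrt (1 - q))⁻¹ * Real.sqrt q ^ n) ^ (2 * m)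
      = ((1 - q) ^ m)⁻¹ * ∑ k ∈ range (n + 1), f k * g (n - k) := by
    intro n
    have hsq : ((Real.sqrt (1 - q))⁻¹ * Real.sqrt q ^ n) ^ (2 * m)
        = ((1 - q) ^ m)⁻¹ * q ^ (n * m) := by
      have e0 : ((Real.sqrt (1 - q))⁻¹ * Real.sqrt q ^ n) ^ 2 = (1 - q)⁻¹ * q ^ n := by
        rw [mul_pow, inv_pow, Real.sq_sqrt h1q.le, ← pow_mul, mul_comm n 2, pow_mul,
          Real.sq_sqrt hq.le]
      rw [pow_mul, e0, mul_pow, inv_pow, ← pow_mul]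
    rw [hsq, rogersSzego]
    rw [Finset.mul_sum, Finset.sum_mul, Finset.mul_sum]
    apply Finset.sum_congr rfl
    intro k hk
    have hkn : k ≤ n := Nat.lt_succ_iff.mp (Finset.mem_range.mp hk)
    have hPn := (qPoch_pos hq.le hq1 n).ne'
    have hPk := (qPoch_pos hq.le hq1 k).ne'
    have hPnk := (qPoch_pos hq.le hq1 (n - k)).ne'
    obtain ⟨d, rfl⟩ : ∃ d, n = k + d := ⟨n - k, (Nat.add_sub_cancel' hkn).symm⟩
    have hd : k + d - k = d := by omega
    rw [hd] at hPnk ⊢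
    have key : (q:ℝ) ^ (k + d) * q ^ ((k + d) * m) = q ^ k * ((q ^ m) ^ k * (q ^ (m+1)) ^ d) := by
      rw [← pow_mul, ← pow_mul, ← pow_add, ← pow_add, ← pow_add]
      congr 1
      ring
    show (q ^ (k+d) / qPoch q q (k+d)) * (qPoch q q (k+d) / (qPoch q q k * qPoch q q d) * (-α / q) ^ k) * (((1 - q) ^ m)⁻¹ * q ^ ((k+d) * m)) = ((1 - q) ^ m)⁻¹ * (f k * g d)
    rw [hf, hg]
    simp only [div_pow, mul_pow]
    field_simp
    linear_combination ((-α) ^ k * qPoch q q (k + d) * qPoch q q k * qPoch q q d * (1 - q) ^ m) * key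
  have hsum2 : Summable (fun n : ℕ => ∑ k ∈ range (n+1), f k * g (n-k)) :=
    (summable_norm_sum_mul_range_of_summable_norm hfn hgn).of_norm
  constructor
  · apply (hsum2.mul_left (((1 - q) ^ m)⁻¹)).congr
    intro n
    exact (hsummand n).symm
  · have htsum : (∑' n : ℕ, (q ^ n / qPoch q q n) * rogersSzego q n (-α / q) *
          ((Real.sqrt (1 - q))⁻¹ * Real.sqrt q ^ n) ^ (2 * m))
        = ((1 - q) ^ m)⁻¹ * ((∑' k : ℕ, f k) * (∑' j : ℕ, g j)) := by
      rw [tsum_congr hsummand, tsum_mul_left,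
        ← tsum_mul_tsum_eq_tsum_sum_range_of_summable_norm hfn hgn]
    rw [htsum]
    have hsplit1 : qPochInf (-α) q = qPoch (-α) q m * qPochInf ((-α) * q ^ m) q :=
      euler_split hq hq1 hαabs m
    have hqq : |q| < 1 := by rwa [abs_of_pos hq]
    have hsplit2 : qPochInf q q = qPoch q q m * qPochInf (q * q ^ m) q :=
      euler_split hq hq1 hqq m
    have he1 : qPochInf ((-α) * q ^ m) q * (∑' k : ℕ, f k) = 1 := by
      rw [hf]
      exact euler_prod hq hq1 hA
    have he2 : qPochInf (q * q ^ m) q * (∑' j : ℕ, g j) = 1 := by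
      have hpow : q * q ^ m = q ^ (m+1) := (pow_succ' q m).symm
      rw [hpow, hg]
      exact euler_prod hq hq1 hqm1
    have hqfact : qFact q m = qPoch q q m * ((1 - q) ^ m)⁻¹ := by
      rw [qFact, qPoch, Finset.prod_div_distrib, Finset.prod_const, div_eq_mul_inv]
      rw [Finset.card_range]
      congr 2
      ext j
      rw [pow_succ']
    rw [hsplit1, hsplit2, hqfact]
    have harr : qPoch (-α) q m * qPochInf (-α * q ^ m) q * (qPoch q q m * qPochInf (q * q ^ m) q) *
          (((1 - q) ^ m)⁻¹ * ((∑' k : ℕ, f k) * ∑' j : ℕ, g j))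
        = qPoch (-α) q m * (qPoch q q m * ((1 - q) ^ m)⁻¹) *
          ((qPochInf (-α * q ^ m) q * (∑' k : ℕ, f k)) *
            (qPochInf (q * q ^ m) q * (∑' j : ℕ, g j))) := by ring
    rw [harr, he1, he2]
    ring
end

section
/- For 0 < q < 1 and 0 ≤ α < q, the series expansion of the coherent state wave function ∑_{n=0}^∞ (z̄√(1-q))^n/((-α;q)_n (q;q)_n) Q_n(cos θ; √α, -√α|q) equals (1/((z̄√(1-q) e^{iθ};q)_∞)) ₂φ₁(√α e^{iθ}, -√α e^{iθ}; -α | q; z̄√(1-q) e^{-iθ}) for |z̄√(1-q)| < 1 and θ ∈ [0, π]. -/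
open Complex

/-- q-Pochhammer symbol `(a;q)_n` with complex `a` and real `q`. -/
noncomputable def qPochC (a : ℂ) (q : ℝ) (n : ℕ) : ℂ :=
  ∏ j ∈ Finset.range n, (1 - a * (q : ℂ) ^ j)

open Finset

noncomputable def Complex.abs : AbsoluteValue ℂ ℝ := NormedField.toAbsoluteValue ℂ
theorem Complex.norm_eq_abs (z : ℂ) : ‖z‖ = Complex.abs z := rfl
theorem Complex.abs_ofReal (r : ℝ) : Complex.abs (r : ℂ) = |r| := by
  rw [← Complex.norm_eq_abs, Complex.norm_real, Real.norm_eq_abs]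
theorem Complex.abs_exp_ofReal_mul_I (x : ℝ) : Complex.abs (Complex.exp (x * I)) = 1 :=
  Complex.norm_exp_ofReal_mul_I x


noncomputable def pP (q : ℝ) (k : ℕ) : ℂ := qPochC (q : ℝ) q k
noncomputable def dP (α q : ℝ) (k : ℕ) : ℂ := qPochC (-α : ℝ) q k
lemma qPochC_zero (a : ℂ) (q : ℝ) : qPochC a q 0 = 1 := Finset.prod_range_zero _
lemma qPochC_succ (a : ℂ) (q : ℝ) (k : ℕ) :
    qPochC a q (k+1) = qPochC a q k * (1 - a * (q:ℂ)^k) := Finset.prod_range_succ _ _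
lemma pP_zero (q : ℝ) : pP q 0 = 1 := qPochC_zero _ _
lemma dP_zero (α q : ℝ) : dP α q 0 = 1 := qPochC_zero _ _
lemma pP_succ (q : ℝ) (k : ℕ) : pP q (k+1) = pP q k * (1 - (q:ℂ)^(k+1)) := by
  rw [pP, qPochC_succ, ← pP]; ring
lemma dP_succ (α q : ℝ) (k : ℕ) : dP α q (k+1) = dP α q k * (1 + (α:ℂ) * (q:ℂ)^k) := by
  rw [dP, qPochC_succ, ← dP]; push_cast; ring
lemma one_sub_qpow_ne {q : ℝ} (hq : 0 ≤ q) (hq1 : q < 1) (j : ℕ) :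
    (1 : ℂ) - (q:ℂ)^(j+1) ≠ 0 := by
  have h : (0:ℝ) < 1 - q^(j+1) := by
    have := pow_lt_one₀ hq hq1 (n := j+1) (by omega); linarith
  intro hc
  have : ((1 - q^(j+1) : ℝ) : ℂ) = 0 := by push_cast; linear_combination hc
  exact absurd (ofReal_eq_zero.mp this) (ne_of_gt h)
lemma one_add_aqpow_ne {q α : ℝ} (hq : 0 ≤ q) (hα : 0 ≤ α) (j : ℕ) :
    (1 : ℂ) + (α:ℂ) * (q:ℂ)^j ≠ 0 := by
  have h : (0:ℝ) < 1 + α * q^j := by positivity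
  intro hc
  have : ((1 + α * q^j : ℝ) : ℂ) = 0 := by push_cast; linear_combination hc
  exact absurd (ofReal_eq_zero.mp this) (ne_of_gt h)
lemma pP_ne {q : ℝ} (hq : 0 ≤ q) (hq1 : q < 1) (k : ℕ) : pP q k ≠ 0 := by
  induction k with
  | zero => rw [pP_zero]; exact one_ne_zero
  | succ n ih => rw [pP_succ]; exact mul_ne_zero ih (one_sub_qpow_ne hq hq1 n)
lemma dP_ne {q α : ℝ} (hq : 0 ≤ q) (hα : 0 ≤ α) (k : ℕ) : dP α q k ≠ 0 := by
  induction k with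
  | zero => rw [dP_zero]; exact one_ne_zero
  | succ n ih => rw [dP_succ]; exact mul_ne_zero ih (one_add_aqpow_ne hq hα n)

noncomputable def aaF (q α : ℝ) (v : ℂ) (C : ℕ → ℂ) (n k : ℕ) : ℂ :=
  dP α q n * pP q n * C (n-k) * v^k / (pP q k * (dP α q (n-k) * pP q (n-k)))
noncomputable def bbF (q α : ℝ) (v : ℂ) (C : ℕ → ℂ) (n k : ℕ) : ℂ :=
  dP α q n * pP q n * C (n-k) * v^k / (pP q (k+1) * (dP α q (n-k) * pP q (n-k)))


section core2
variable {q α : ℝ}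

lemma stepE1 (hq : 0 < q) (hq1 : q < 1) (hα : 0 ≤ α) (v : ℂ) (C : ℕ → ℂ) (k m : ℕ) :
    aaF q α v C (k+m+1) (k+1) * (1 - (q:ℂ)^(k+1))
      = ((1-(q:ℂ)^(k+m+1))*(1+(α:ℂ)*(q:ℂ)^(k+m))) * v * aaF q α v C (k+m) k := by
  have e1 : k+m+1-(k+1) = m := by omega
  have e2 : k+m-k = m := by omega
  rw [aaF, aaF, e1, e2, show k+m+1 = (k+m)+1 from rfl, dP_succ α q (k+m), pP_succ q (k+m),
    pP_succ q k]
  have h1 := pP_ne hq.le hq1 (q := q) k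
  have h2 := pP_ne hq.le hq1 (q := q) m
  have h3 := dP_ne hq.le hα (q := q) (α := α) m
  have h4 := one_sub_qpow_ne hq.le hq1 (q := q) k
  field_simp
  ring

lemma stepA (hq : 0 < q) (hq1 : q < 1) (hα : 0 ≤ α) (v : ℂ) (C : ℕ → ℂ) (k m : ℕ) :
    aaF q α v C (k+m+1) (k+1)
      = (v + (α:ℂ)*v*(q:ℂ)^(k+m)*(q:ℂ)^m) * aaF q α v C (k+m) k
        + ((α:ℂ)*(q:ℂ)^(k+m) + (q:ℂ)^(k+1))*v*(1 - (q:ℂ)^m) * bbF q α v C (k+m) k := by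
  have e1 : k+m+1-(k+1) = m := by omega
  have e2 : k+m-k = m := by omega
  rw [aaF, aaF, bbF, e1, e2, show k+m+1 = (k+m)+1 from rfl, dP_succ α q (k+m), pP_succ q (k+m),
    pP_succ q k]
  have h1 := pP_ne hq.le hq1 (q := q) k
  have h2 := pP_ne hq.le hq1 (q := q) m
  have h3 := dP_ne hq.le hα (q := q) (α := α) m
  have h4 := one_sub_qpow_ne hq.le hq1 (q := q) k
  field_simp
  ring

lemma stepF (hq : 0 < q) (hq1 : q < 1) (hα : 0 ≤ α) (v : ℂ) (C : ℕ → ℂ)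
    (hC : ∀ j, C (j+1) = C j * (1 - (α:ℂ)*v*(q:ℂ)^(2*j))) (k m : ℕ) :
    ((α:ℂ)*(q:ℂ)^(k+m+1) + (q:ℂ)^(k+1))*v*(1 - (q:ℂ)^(m+1)) * bbF q α v C (k+m+1) k
      = ((q:ℂ)^(k+1) - (α:ℂ)*v*(q:ℂ)^(k+m+1)*(q:ℂ)^m) * aaF q α v C (k+m+1) (k+1) := by
  have e1 : k+m+1-(k+1) = m := by omega
  have e2 : k+m+1-k = m+1 := by omega
  rw [aaF, bbF, e1, e2, dP_succ α q m, pP_succ q m, hC m, show 2*m = m + m from by omega, pow_add]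
  have h1 := pP_ne hq.le hq1 (q := q) (k+1)
  have h2 := pP_ne hq.le hq1 (q := q) m
  have h3 := dP_ne hq.le hα (q := q) (α := α) m
  have h4 := one_sub_qpow_ne hq.le hq1 (q := q) m
  have h5 := one_add_aqpow_ne hq.le hα (q := q) (α := α) m
  field_simp
  ring

lemma stepB (hq : 0 < q) (hq1 : q < 1) (hα : 0 ≤ α) (v : ℂ) (C : ℕ → ℂ)
    (hC : ∀ j, C (j+1) = C j * (1 - (α:ℂ)*v*(q:ℂ)^(2*j))) (n : ℕ) :
    (α:ℂ)*v*(q:ℂ)^(n+1)*(q:ℂ)^(n+1) * aaF q α v C (n+1) 0 + aaF q α v C (n+2) 0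
      = aaF q α v C (n+1) 0 := by
  rw [aaF, aaF, Nat.sub_zero, Nat.sub_zero, pP_zero, pow_zero,
    show n+2 = (n+1)+1 from rfl, hC (n+1), show 2*(n+1) = (n+1) + (n+1) from by omega, pow_add]
  have h1 := pP_ne hq.le hq1 (q := q) (n+1)
  have h2 := dP_ne hq.le hα (q := q) (α := α) (n+1)
  have h3 := pP_ne hq.le hq1 (q := q) (n+2)
  have h4 := dP_ne hq.le hα (q := q) (α := α) (n+2)
  rw [show n+1+1 = n+2 from rfl]
  field_simp
  ring

lemma lamE1 (hq : 0 < q) (hq1 : q < 1) (hα : 0 ≤ α) (v : ℂ) (C : ℕ → ℂ) (n : ℕ) :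
    ∑ k ∈ Finset.range (n+2), aaF q α v C (n+1) k
      = ((1-(q:ℂ)^(n+1))*(1+(α:ℂ)*(q:ℂ)^n)) * v * ∑ k ∈ Finset.range (n+1), aaF q α v C n k
        + ∑ k ∈ Finset.range (n+2), (q:ℂ)^k * aaF q α v C (n+1) k := by
  have key : ∑ k ∈ Finset.range (n+2), (aaF q α v C (n+1) k - (q:ℂ)^k * aaF q α v C (n+1) k)
      = ((1-(q:ℂ)^(n+1))*(1+(α:ℂ)*(q:ℂ)^n)) * v * ∑ k ∈ Finset.range (n+1), aaF q α v C n k := by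
    rw [Finset.sum_range_succ']
    simp only [pow_zero, one_mul, sub_self, add_zero]
    rw [Finset.mul_sum]
    apply Finset.sum_congr rfl
    intro k hk
    have hk' : k ≤ n := by have := Finset.mem_range.mp hk; omega
    obtain ⟨m, hm⟩ : ∃ m, n = k + m := ⟨n - k, by omega⟩
    subst hm
    linear_combination stepE1 hq hq1 hα v C k m
  rw [Finset.sum_sub_distrib] at key
  linear_combination key

lemma lamE2 (hq : 0 < q) (hq1 : q < 1) (hα : 0 ≤ α) (v : ℂ) (C : ℕ → ℂ)
    (hC : ∀ j, C (j+1) = C j * (1 - (α:ℂ)*v*(q:ℂ)^(2*j))) (n : ℕ) :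
    ∑ k ∈ Finset.range (n+3), aaF q α v C (n+2) k
      = v * ∑ k ∈ Finset.range (n+2), aaF q α v C (n+1) k
        + ∑ k ∈ Finset.range (n+2), (q:ℂ)^k * aaF q α v C (n+1) k := by
  have hsplit : ∑ k ∈ Finset.range (n+2), aaF q α v C (n+2) (k+1)
      = v * ∑ k ∈ Finset.range (n+2), aaF q α v C (n+1) k
        + (∑ k ∈ Finset.range (n+2), (α:ℂ)*v*(q:ℂ)^(n+1)*(q:ℂ)^((n+1)-k) * aaF q α v C (n+1) k
          + ∑ k ∈ Finset.range (n+2),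
              ((α:ℂ)*(q:ℂ)^(n+1) + (q:ℂ)^(k+1))*v*(1 - (q:ℂ)^((n+1)-k)) * bbF q α v C (n+1) k) := by
    rw [Finset.mul_sum, ← Finset.sum_add_distrib, ← Finset.sum_add_distrib]
    apply Finset.sum_congr rfl
    intro k hk
    have hk' : k ≤ n+1 := by have := Finset.mem_range.mp hk; omega
    obtain ⟨m, hm⟩ : ∃ m, n+1 = k + m := ⟨n+1 - k, by omega⟩
    rw [show n+2 = k+m+1 from by omega, hm, Nat.add_sub_cancel_left]
    linear_combination stepA hq hq1 hα v C k m
  have h1b : ∑ k ∈ Finset.range (n+2), (α:ℂ)*v*(q:ℂ)^(n+1)*(q:ℂ)^((n+1)-k) * aaF q α v C (n+1) k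
      = (∑ k ∈ Finset.range (n+1),
          (α:ℂ)*v*(q:ℂ)^(n+1)*(q:ℂ)^((n+1)-(k+1)) * aaF q α v C (n+1) (k+1))
        + (α:ℂ)*v*(q:ℂ)^(n+1)*(q:ℂ)^((n+1)-0) * aaF q α v C (n+1) 0 :=
    Finset.sum_range_succ' _ (n+1)
  have h12 : ∑ k ∈ Finset.range (n+2),
        ((α:ℂ)*(q:ℂ)^(n+1) + (q:ℂ)^(k+1))*v*(1 - (q:ℂ)^((n+1)-k)) * bbF q α v C (n+1) k
      = ∑ k ∈ Finset.range (n+1),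
        ((α:ℂ)*(q:ℂ)^(n+1) + (q:ℂ)^(k+1))*v*(1 - (q:ℂ)^((n+1)-k)) * bbF q α v C (n+1) k := by
    rw [Finset.sum_range_succ]
    simp
  have hcomb : ∑ k ∈ Finset.range (n+1),
        ((α:ℂ)*(q:ℂ)^(n+1) + (q:ℂ)^(k+1))*v*(1 - (q:ℂ)^((n+1)-k)) * bbF q α v C (n+1) k
      + ∑ k ∈ Finset.range (n+1),
        (α:ℂ)*v*(q:ℂ)^(n+1)*(q:ℂ)^((n+1)-(k+1)) * aaF q α v C (n+1) (k+1)
      = ∑ k ∈ Finset.range (n+1), (q:ℂ)^(k+1) * aaF q α v C (n+1) (k+1) := by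
    rw [← Finset.sum_add_distrib]
    apply Finset.sum_congr rfl
    intro k hk
    have hk' : k ≤ n := by have := Finset.mem_range.mp hk; omega
    obtain ⟨m, hm⟩ : ∃ m, n = k + m := ⟨n - k, by omega⟩
    subst hm
    rw [show k+m+1-(k+1) = m from by omega, show k+m+1-k = m+1 from by omega]
    linear_combination stepF hq hq1 hα v C hC k m
  have hRHS : ∑ k ∈ Finset.range (n+2), (q:ℂ)^k * aaF q α v C (n+1) k
      = (∑ k ∈ Finset.range (n+1), (q:ℂ)^(k+1) * aaF q α v C (n+1) (k+1))
        + (q:ℂ)^0 * aaF q α v C (n+1) 0 :=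
    Finset.sum_range_succ' _ (n+1)
  have hL : ∑ k ∈ Finset.range (n+3), aaF q α v C (n+2) k
      = (∑ k ∈ Finset.range (n+2), aaF q α v C (n+2) (k+1)) + aaF q α v C (n+2) 0 :=
    Finset.sum_range_succ' _ (n+2)
  have hB := stepB hq hq1 hα v C hC n
  rw [hL, hsplit, h1b, h12, hRHS]
  rw [show (n+1)-0 = n+1 from rfl] at *
  linear_combination hcomb + hB

lemma sumkey (hq : 0 < q) (hq1 : q < 1) (hα : 0 ≤ α) (v : ℂ) (C : ℕ → ℂ)
    (hC : ∀ j, C (j+1) = C j * (1 - (α:ℂ)*v*(q:ℂ)^(2*j))) (n : ℕ) :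
    ∑ k ∈ Finset.range (n+3), aaF q α v C (n+2) k
      = (v+1) * ∑ k ∈ Finset.range (n+2), aaF q α v C (n+1) k
        - ((1-(q:ℂ)^(n+1))*(1+(α:ℂ)*(q:ℂ)^n)) * v * ∑ k ∈ Finset.range (n+1), aaF q α v C n k := by
  linear_combination lamE2 hq hq1 hα v C hC n - lamE1 hq hq1 hα v C n

end core2

section keysec
variable {q α : ℝ}

lemma keylemma (hq : 0 < q) (hq1 : q < 1) (hα : 0 ≤ α) (Q : ℕ → ℝ → ℝ)
    (hQ0 : ∀ x, Q 0 x = 1) (hQ1 : ∀ x, Q 1 x = 2 * x)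
    (hQrec : ∀ n : ℕ, ∀ x, 2 * x * Q (n + 1) x
      = Q (n + 2) x + (1 - q ^ (n + 1)) * (1 + α * q ^ n) * Q n x)
    (x : ℝ) (u : ℂ) (hu : ((2 * x : ℝ) : ℂ) * u = u^2 + 1)
    (C : ℕ → ℂ) (hC0 : C 0 = 1)
    (hC : ∀ j, C (j+1) = C j * (1 - (α:ℂ)*(u^2)*(q:ℂ)^(2*j))) :
    ∀ n, ((Q n x : ℝ) : ℂ) * u^n = ∑ k ∈ Finset.range (n+1), aaF q α (u^2) C n k := by
  intro n
  induction n using Nat.twoStepInduction with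
  | zero =>
    simp [hQ0, aaF, hC0, pP_zero, dP_zero, pow_zero]
  | one =>
    have h1 : C 1 = 1 - (α:ℂ)*u^2 := by rw [hC 0, hC0]; simp
    have hd1 : dP α q 1 = 1 + (α:ℂ) := by rw [dP_succ α q 0, dP_zero]; simp
    have hne : dP α q 1 * pP q 1 ≠ 0 :=
      mul_ne_zero (dP_ne hq.le hα 1) (pP_ne hq.le hq1 1)
    have hnp : pP q 1 ≠ 0 := pP_ne hq.le hq1 1
    have e0 : aaF q α (u^2) C 1 0 = C 1 := by
      rw [aaF]
      simp only [Nat.sub_zero, pow_zero, pP_zero, one_mul, mul_one]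
      exact mul_div_cancel_left₀ _ hne
    have e1 : aaF q α (u^2) C 1 1 = dP α q 1 * u^2 := by
      rw [aaF]
      simp only [Nat.sub_self, pP_zero, dP_zero, pow_one, hC0, one_mul, mul_one]
      field_simp
    rw [Finset.sum_range_succ, Finset.sum_range_succ, Finset.sum_range_zero, zero_add, e0, e1,
      hQ1, h1, hd1, pow_one]
    push_cast at hu ⊢
    linear_combination hu
  | more n ih1 ih2 =>
    have hcast : ((Q (n+2) x : ℝ) : ℂ)
        = ((2*x : ℝ) : ℂ) * ((Q (n+1) x : ℝ) : ℂ)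
          - ((1-(q:ℂ)^(n+1))*(1+(α:ℂ)*(q:ℂ)^n)) * ((Q n x : ℝ) : ℂ) := by
      have h2 := Complex.ofReal_inj.mpr (hQrec n x)
      push_cast at h2 ⊢
      linear_combination -h2
    have hk := sumkey hq hq1 hα (u^2) C hC n
    calc ((Q (n+2) x : ℝ) : ℂ) * u^(n+2)
        = (((2*x:ℝ):ℂ) * u) * (((Q (n+1) x : ℝ):ℂ) * u^(n+1))
          - ((1-(q:ℂ)^(n+1))*(1+(α:ℂ)*(q:ℂ)^n)) * u^2 * (((Q n x : ℝ):ℂ) * u^n) := by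
          rw [hcast]; push_cast; ring
      _ = (u^2+1) * (∑ k ∈ Finset.range (n+2), aaF q α (u^2) C (n+1) k)
          - ((1-(q:ℂ)^(n+1))*(1+(α:ℂ)*(q:ℂ)^n)) * u^2
            * (∑ k ∈ Finset.range (n+1), aaF q α (u^2) C n k) := by
          rw [ih1, ih2, hu]
      _ = ∑ k ∈ Finset.range (n+3), aaF q α (u^2) C (n+2) k := by
          rw [hk]
end keysec

section analysis
variable {q : ℝ}
open Filter Topology

noncomputable def pR (q : ℝ) (k : ℕ) : ℝ := ∏ j ∈ Finset.range k, (1 - q^(j+1))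

lemma pR_zero (q : ℝ) : pR q 0 = 1 := Finset.prod_range_zero _
lemma pR_succ (q : ℝ) (k : ℕ) : pR q (k+1) = pR q k * (1 - q^(k+1)) := Finset.prod_range_succ _ _

lemma pR_pos (hq : 0 ≤ q) (hq1 : q < 1) (k : ℕ) : 0 < pR q k := by
  apply Finset.prod_pos
  intro j _
  have := pow_lt_one₀ hq hq1 (n := j+1) (by omega)
  linarith

lemma pP_eq (q : ℝ) (k : ℕ) : pP q k = ((pR q k : ℝ) : ℂ) := by
  rw [pP, qPochC, pR]
  push_cast
  apply Finset.prod_congr rfl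
  intro j _
  ring

lemma gnorm (hq : 0 ≤ q) (hq1 : q < 1) (y : ℂ) (k : ℕ) :
    ‖y^k / pP q k‖ = (Complex.abs y)^k / pR q k := by
  rw [pP_eq, norm_div, norm_pow, Complex.norm_real,
    Real.norm_of_nonneg (pR_pos hq hq1 k).le, Complex.norm_eq_abs]

lemma summable_g_norm (hq : 0 < q) (hq1 : q < 1) (y : ℂ) (hy : Complex.abs y < 1) :
    Summable (fun k => ‖y^k / pP q k‖) := by
  have h0 := Complex.abs.nonneg y
  apply summable_of_ratio_norm_eventually_le (r := (1 + Complex.abs y)/2) (by linarith)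
  have htend : Tendsto (fun k : ℕ => (1 + Complex.abs y)/2 * (1 - q^(k+1))) atTop
      (𝓝 ((1 + Complex.abs y)/2 * (1 - 0))) := by
    apply Tendsto.mul tendsto_const_nhds
    exact (tendsto_const_nhds.sub ((tendsto_pow_atTop_nhds_zero_of_lt_one hq.le hq1).comp
      (tendsto_add_atTop_nat 1)))
  have hev : ∀ᶠ k : ℕ in atTop, Complex.abs y < (1 + Complex.abs y)/2 * (1 - q^(k+1)) := by
    apply htend.eventually_const_lt
    rw [sub_zero]; linarith
  filter_upwards [hev] with k hk
  rw [Real.norm_of_nonneg (norm_nonneg _), Real.norm_of_nonneg (norm_nonneg _),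
    gnorm hq.le hq1, gnorm hq.le hq1, pR_succ]
  have hp := pR_pos hq.le hq1 k
  have hq2 : 0 < 1 - q^(k+1) := by
    have := pow_lt_one₀ hq.le hq1 (n := k+1) (by omega); linarith
  rw [div_le_iff₀ (by positivity), pow_succ]
  calc Complex.abs y ^ k * Complex.abs y
      ≤ Complex.abs y ^ k * ((1 + Complex.abs y)/2 * (1 - q^(k+1))) := by
        apply mul_le_mul_of_nonneg_left hk.le (by positivity)
    _ = (1 + Complex.abs y)/2 * (Complex.abs y ^ k / pR q k) * (pR q k * (1 - q^(k+1))) := by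
        field_simp
end analysis

section euler
set_option maxHeartbeats 1000000
variable {q : ℝ}
open Filter Topology

lemma abs_qpow_mul_lt (hq : 0 < q) (hq1 : q < 1) (x : ℂ) (hx : Complex.abs x < 1) (N : ℕ) :
    Complex.abs ((q:ℂ)^N * x) < 1 := by
  rw [map_mul, map_pow, Complex.abs_ofReal, _root_.abs_of_nonneg hq.le]
  calc q^N * Complex.abs x ≤ 1 * Complex.abs x := by
        apply mul_le_mul_of_nonneg_right _ (Complex.abs.nonneg x)
        exact pow_le_one₀ hq.le hq1.le
    _ < 1 := by rwa [one_mul]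

lemma euler_step (hq : 0 < q) (hq1 : q < 1) (y : ℂ) (hy : Complex.abs y < 1) :
    (∑' m, ((q:ℂ)*y)^m / pP q m) = (1 - y) * ∑' m, y^m / pP q m := by
  have h0 : HasSum (fun m => y^m / pP q m) (∑' m, y^m / pP q m) :=
    ((summable_g_norm hq hq1 y hy).of_norm).hasSum
  have h1 : HasSum (fun m => y * (y^m / pP q m)) (y * ∑' m, y^m / pP q m) := h0.mul_left y
  set G : ℕ → ℂ := fun m => if m = 0 then 0 else y * (y^(m-1) / pP q (m-1)) with hG
  have h2 : HasSum G (y * ∑' m, y^m / pP q m) := by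
    have hshift : HasSum (fun n => G (n+1)) (y * ∑' m, y^m / pP q m) := by
      simpa [hG] using h1
    have := (hasSum_nat_add_iff (f := G) 1).mp hshift
    simpa [hG] using this
  have h3 : HasSum (fun m => y^m / pP q m - G m)
      ((∑' m, y^m / pP q m) - y * ∑' m, y^m / pP q m) := h0.sub h2
  have hfun : (fun m => y^m / pP q m - G m) = fun m => ((q:ℂ)*y)^m / pP q m := by
    funext m
    match m with
    | 0 => simp [hG, pP_zero]
    | (m+1) =>
      simp only [hG, if_neg (Nat.succ_ne_zero m), Nat.add_sub_cancel]
      rw [pP_succ]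
      have hp := pP_ne hq.le hq1 (q := q) m
      have h4 := one_sub_qpow_ne hq.le hq1 (q := q) m
      field_simp
      ring
  rw [hfun] at h3
  rw [h3.tsum_eq, one_sub_mul]

lemma euler_iter (hq : 0 < q) (hq1 : q < 1) (x : ℂ) (hx : Complex.abs x < 1) (N : ℕ) :
    (∑' m, x^m / pP q m) * ∏ j ∈ Finset.range N, (1 - x * (q:ℂ)^j)
      = ∑' m, ((q:ℂ)^N * x)^m / pP q m := by
  induction N with
  | zero => simp
  | succ N ih =>
    rw [Finset.prod_range_succ, ← mul_assoc, ih,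
      show ((q:ℂ)^(N+1) * x) = (q:ℂ) * ((q:ℂ)^N * x) from by ring,
      euler_step hq hq1 _ (abs_qpow_mul_lt hq hq1 x hx N)]
    ring

lemma euler_multipliable (hq : 0 < q) (hq1 : q < 1) (x : ℂ) (hx : Complex.abs x < 1) :
    Multipliable (fun j : ℕ => 1 - x * (q:ℂ)^j) := by
  have hne : ∀ j : ℕ, (1 - x * (q:ℂ)^j) ≠ 0 := by
    intro j hc
    have h1 : x * (q:ℂ)^j = 1 := by linear_combination -hc
    have h2 : Complex.abs (x * (q:ℂ)^j) = 1 := by rw [h1]; simp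
    rw [map_mul, map_pow, Complex.abs_ofReal, _root_.abs_of_nonneg hq.le] at h2
    have h3 : Complex.abs x * q^j ≤ Complex.abs x * 1 :=
      mul_le_mul_of_nonneg_left (pow_le_one₀ hq.le hq1.le) (Complex.abs.nonneg x)
    rw [mul_comm] at h2
    rw [mul_one] at h3
    nlinarith [Complex.abs.nonneg x]
  have hlog : Summable (fun j : ℕ => Complex.log (1 - x * (q:ℂ)^j)) := by
    apply Summable.of_norm_bounded_eventually (g := fun j => 3/2 * (Complex.abs x * q^j))
    · apply Summable.mul_left
      apply Summable.mul_left
      exact summable_geometric_of_lt_one hq.le hq1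
    · rw [Nat.cofinite_eq_atTop]
      have htend : Tendsto (fun j : ℕ => Complex.abs x * q^j) atTop (𝓝 (Complex.abs x * 0)) :=
        (tendsto_pow_atTop_nhds_zero_of_lt_one hq.le hq1).const_mul _
      have hev : ∀ᶠ j : ℕ in atTop, Complex.abs x * q^j ≤ 1/2 := by
        apply htend.eventually_le_const
        rw [mul_zero]; norm_num
      filter_upwards [hev] with j hj
      have hzn : ‖-(x * (q:ℂ)^j)‖ ≤ 1/2 := by
        rw [norm_neg, Complex.norm_eq_abs, map_mul, map_pow, Complex.abs_ofReal,
          _root_.abs_of_nonneg hq.le]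
        exact hj
      calc ‖Complex.log (1 - x * (q:ℂ)^j)‖
          = ‖Complex.log (1 + -(x * (q:ℂ)^j))‖ := by rw [sub_eq_add_neg]
        _ ≤ 3/2 * ‖-(x * (q:ℂ)^j)‖ := Complex.norm_log_one_add_half_le_self hzn
        _ ≤ 3/2 * (Complex.abs x * q^j) := by
            rw [norm_neg, Complex.norm_eq_abs, map_mul, map_pow, Complex.abs_ofReal,
              _root_.abs_of_nonneg hq.le]
  exact Complex.multipliable_of_summable_log hlog

lemma euler_hasSum (hq : 0 < q) (hq1 : q < 1) (x : ℂ) (hx : Complex.abs x < 1) :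
    HasSum (fun m => x^m / pP q m) ((∏' j : ℕ, (1 - x * (q:ℂ)^j))⁻¹) := by
  have hlim1 : Tendsto (fun N => (∑' m, x^m / pP q m) * ∏ j ∈ Finset.range N, (1 - x * (q:ℂ)^j))
      atTop (𝓝 ((∑' m, x^m / pP q m) * ∏' j : ℕ, (1 - x * (q:ℂ)^j))) :=
    ((euler_multipliable hq hq1 x hx).hasProd.tendsto_prod_nat).const_mul _
  have hbound : ∀ N : ℕ, ‖(∑' m, ((q:ℂ)^N * x)^m / pP q m) - 1‖
      ≤ q^N * ∑' m, ‖x^(m+1) / pP q (m+1)‖ := by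
    intro N
    have hy := abs_qpow_mul_lt hq hq1 x hx N
    have h0 : HasSum (fun m => ((q:ℂ)^N * x)^m / pP q m) (∑' m, ((q:ℂ)^N * x)^m / pP q m) :=
      ((summable_g_norm hq hq1 _ hy).of_norm).hasSum
    have h1 : HasSum (fun m => ((q:ℂ)^N * x)^(m+1) / pP q (m+1))
        ((∑' m, ((q:ℂ)^N * x)^m / pP q m) - 1) := by
      apply (hasSum_nat_add_iff (f := fun m => ((q:ℂ)^N * x)^m / pP q m) 1).mpr
      simpa [pP_zero] using h0
    rw [← h1.tsum_eq]
    have hs1 : Summable (fun m => ‖((q:ℂ)^N * x)^(m+1) / pP q (m+1)‖) :=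
      (summable_nat_add_iff 1).mpr (summable_g_norm hq hq1 _ hy)
    have hs2 : Summable (fun m => q^N * ‖x^(m+1) / pP q (m+1)‖) :=
      ((summable_nat_add_iff 1).mpr (summable_g_norm hq hq1 x hx)).mul_left _
    calc ‖∑' m, ((q:ℂ)^N * x)^(m+1) / pP q (m+1)‖
        ≤ ∑' m, ‖((q:ℂ)^N * x)^(m+1) / pP q (m+1)‖ := norm_tsum_le_tsum_norm hs1
      _ ≤ ∑' m, q^N * ‖x^(m+1) / pP q (m+1)‖ := by
          apply Summable.tsum_le_tsum _ hs1 hs2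
          intro m
          rw [gnorm hq.le hq1, gnorm hq.le hq1, map_mul, map_pow, Complex.abs_ofReal,
            _root_.abs_of_nonneg hq.le, mul_pow]
          have hpow : (q^N)^(m+1) ≤ q^N := by
            calc (q^N)^(m+1) = q^(N*(m+1)) := by rw [← pow_mul]
              _ ≤ q^N := pow_le_pow_of_le_one hq.le hq1.le (Nat.le_mul_of_pos_right N (by omega))
          have hp := pR_pos hq.le hq1 (m+1)
          have h5 : (q^N)^(m+1) * Complex.abs x^(m+1) ≤ q^N * Complex.abs x^(m+1) :=
            mul_le_mul_of_nonneg_right hpow (by positivity)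
          calc (q^N)^(m+1) * Complex.abs x^(m+1) / pR q (m+1)
              ≤ q^N * Complex.abs x^(m+1) / pR q (m+1) := (div_le_div_iff_of_pos_right hp).mpr h5
            _ = q^N * (Complex.abs x^(m+1) / pR q (m+1)) := mul_div_assoc _ _ _
      _ = q^N * ∑' m, ‖x^(m+1) / pP q (m+1)‖ := tsum_mul_left
  have hlim2 : Tendsto (fun N : ℕ => ∑' m, ((q:ℂ)^N * x)^m / pP q m) atTop (𝓝 1) := by
    have hz : Tendsto (fun N : ℕ => (∑' m, ((q:ℂ)^N * x)^m / pP q m) - 1) atTop (𝓝 0) := by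
      apply squeeze_zero_norm hbound
      have := (tendsto_pow_atTop_nhds_zero_of_lt_one hq.le hq1).mul_const
        (∑' m, ‖x^(m+1) / pP q (m+1)‖)
      simpa using this
    have := hz.add_const 1
    simpa using this
  have hone : (∑' m, x^m / pP q m) * (∏' j : ℕ, (1 - x * (q:ℂ)^j)) = 1 := by
    apply tendsto_nhds_unique hlim1
    have hfe : (fun N => (∑' m, x^m / pP q m) * ∏ j ∈ Finset.range N, (1 - x * (q:ℂ)^j))
        = fun N : ℕ => ∑' m, ((q:ℂ)^N * x)^m / pP q m := funext (euler_iter hq hq1 x hx)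
    rw [hfe]
    exact hlim2
  have hfinal : (∑' m, x^m / pP q m) = (∏' j : ℕ, (1 - x * (q:ℂ)^j))⁻¹ :=
    eq_inv_of_mul_eq_one_left hone
  rw [← hfinal]
  exact ((summable_g_norm hq hq1 x hx).of_norm).hasSum
end euler

section hsum
variable {q α : ℝ}
open Filter Topology

lemma summable_h_norm (hq : 0 < q) (hq1 : q < 1) (hα : 0 ≤ α) (s t : ℂ)
    (hs : Complex.abs s = Real.sqrt α) (ht : Complex.abs t < 1) :
    Summable (fun k => ‖(qPochC s q k * qPochC (-s) q k) / (dP α q k * pP q k) * t^k‖) := by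
  set h : ℕ → ℂ := fun k => (qPochC s q k * qPochC (-s) q k) / (dP α q k * pP q k) * t^k with hh
  have hrec : ∀ k, h (k+1) = h k *
      ((1 - s*(q:ℂ)^k) * (1 + s*(q:ℂ)^k) * t / ((1 + (α:ℂ)*(q:ℂ)^k) * (1 - (q:ℂ)^(k+1)))) := by
    intro k
    rw [hh]
    simp only
    rw [qPochC_succ s, qPochC_succ (-s), dP_succ, pP_succ]
    have h1 := pP_ne hq.le hq1 (q := q) k
    have h2 := dP_ne hq.le hα (q := q) (α := α) k
    have h3 := one_sub_qpow_ne hq.le hq1 (q := q) k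
    have h4 := one_add_aqpow_ne hq.le hα (q := q) (α := α) k
    field_simp
    ring
  have hqpow : ∀ k : ℕ, Complex.abs ((q:ℂ)^k) = q^k := by
    intro k
    rw [map_pow, Complex.abs_ofReal, _root_.abs_of_nonneg hq.le]
  have hp1 : ∀ k : ℕ, q^(k+1) < 1 := fun k => pow_lt_one₀ hq.le hq1 (by omega)
  have hdenpos : ∀ k : ℕ, (0:ℝ) < (1 + α*q^k) * (1 - q^(k+1)) := by
    intro k
    have hp2 : (0:ℝ) ≤ α * q^k := by positivity
    nlinarith [hp1 k]
  have hnormden : ∀ k, Complex.abs ((1 + (α:ℂ)*(q:ℂ)^k) * (1 - (q:ℂ)^(k+1)))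
      = (1 + α*q^k) * (1 - q^(k+1)) := by
    intro k
    have he : ((1 + (α:ℂ)*(q:ℂ)^k) * (1 - (q:ℂ)^(k+1)))
        = (((1 + α*q^k) * (1 - q^(k+1)) : ℝ) : ℂ) := by push_cast; ring
    rw [he, Complex.abs_ofReal]
    exact _root_.abs_of_nonneg (hdenpos k).le
  set ρ : ℕ → ℝ := fun k =>
    (1 + Real.sqrt α * q^k)^2 * Complex.abs t / ((1 + α*q^k) * (1 - q^(k+1))) with hρ
  have hratio : ∀ k, ‖h (k+1)‖ ≤ ρ k * ‖h k‖ := by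
    intro k
    rw [hrec k, norm_mul, mul_comm]
    apply mul_le_mul_of_nonneg_right _ (norm_nonneg _)
    rw [Complex.norm_eq_abs, map_div₀, hnormden, hρ]
    simp only
    apply (div_le_div_iff_of_pos_right (hdenpos k)).mpr
    have hb1 : Complex.abs (1 - s*(q:ℂ)^k) ≤ 1 + Real.sqrt α * q^k := by
      calc Complex.abs (1 - s*(q:ℂ)^k) ≤ Complex.abs 1 + Complex.abs (s*(q:ℂ)^k) :=
            by rw [sub_eq_add_neg]; simpa using Complex.abs.add_le 1 (-(s*(q:ℂ)^k))
        _ = 1 + Real.sqrt α * q^k := by rw [map_one, map_mul, hs, hqpow]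
    have hb2 : Complex.abs (1 + s*(q:ℂ)^k) ≤ 1 + Real.sqrt α * q^k := by
      calc Complex.abs (1 + s*(q:ℂ)^k) ≤ Complex.abs 1 + Complex.abs (s*(q:ℂ)^k) :=
            Complex.abs.add_le _ _
        _ = 1 + Real.sqrt α * q^k := by rw [map_one, map_mul, hs, hqpow]
    have hpos : (0:ℝ) ≤ 1 + Real.sqrt α * q^k := by positivity
    calc Complex.abs ((1 - s*(q:ℂ)^k) * (1 + s*(q:ℂ)^k) * t)
        = Complex.abs (1 - s*(q:ℂ)^k) * Complex.abs (1 + s*(q:ℂ)^k) * Complex.abs t := by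
          rw [map_mul, map_mul]
      _ ≤ (1 + Real.sqrt α * q^k) * (1 + Real.sqrt α * q^k) * Complex.abs t := by
          apply mul_le_mul_of_nonneg_right _ (Complex.abs.nonneg t)
          exact mul_le_mul hb1 hb2 (Complex.abs.nonneg _) hpos
      _ = (1 + Real.sqrt α * q^k)^2 * Complex.abs t := by ring
  apply summable_of_ratio_norm_eventually_le (r := (1 + Complex.abs t)/2)
    (by have := Complex.abs.nonneg t; linarith)
  have h1 : Tendsto (fun k : ℕ => q^k) atTop (𝓝 0) :=
    tendsto_pow_atTop_nhds_zero_of_lt_one hq.le hq1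
  have h2 : Tendsto (fun k : ℕ => q^(k+1)) atTop (𝓝 0) := h1.comp (tendsto_add_atTop_nat 1)
  have hnum : Tendsto (fun k : ℕ => (1 + Real.sqrt α * q^k)^2 * Complex.abs t) atTop
      (𝓝 ((1 + Real.sqrt α * 0)^2 * Complex.abs t)) :=
    ((tendsto_const_nhds.add (h1.const_mul _)).pow 2).mul_const _
  have hden : Tendsto (fun k : ℕ => (1 + α*q^k) * (1 - q^(k+1))) atTop
      (𝓝 ((1 + α*0) * (1-0))) :=
    (tendsto_const_nhds.add (h1.const_mul _)).mul (tendsto_const_nhds.sub h2)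
  have htendρ : Tendsto ρ atTop (𝓝 (Complex.abs t)) := by
    have := hnum.div hden (by norm_num)
    simp only [mul_zero, add_zero, sub_zero, one_pow, one_mul, mul_one, div_one] at this
    exact this
  have hev : ∀ᶠ k in atTop, ρ k ≤ (1 + Complex.abs t)/2 :=
    htendρ.eventually_le_const (by linarith)
  filter_upwards [hev] with k hk
  rw [Real.norm_of_nonneg (norm_nonneg _), Real.norm_of_nonneg (norm_nonneg _)]
  exact (hratio k).trans (mul_le_mul_of_nonneg_right hk (norm_nonneg _))
end hsum

/-- Closed form of the generalized q-coherent state wave function: for `|z̄√(1-q)| < 1`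
and `θ ∈ [0,π]`,
`∑_n (z̄√(1-q))^n/((-α;q)_n (q;q)_n) Q_n(cos θ; √α, -√α|q)
  = (1/((z̄√(1-q) e^{iθ};q)_∞)) ₂φ₁(√α e^{iθ}, -√α e^{iθ}; -α|q; z̄√(1-q) e^{-iθ})`,
where the Al-Salam–Chihara polynomials `Q_n` are characterized by their recurrence. -/
theorem coherent_state_closed_form (q α : ℝ) (hq : 0 < q) (hq1 : q < 1)
    (hα : 0 ≤ α) (hαq : α < q)
    (Q : ℕ → ℝ → ℝ)
    (hQ0 : ∀ x, Q 0 x = 1) (hQ1 : ∀ x, Q 1 x = 2 * x)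
    (hQrec : ∀ n : ℕ, ∀ x,
      2 * x * Q (n + 1) x = Q (n + 2) x + (1 - q ^ (n + 1)) * (1 + α * q ^ n) * Q n x)
    (z : ℂ) (hz : ‖(starRingEnd ℂ) z * (Real.sqrt (1 - q) : ℝ)‖ < 1)
    (θ : ℝ) (hθ : θ ∈ Set.Icc 0 Real.pi) :
    HasSum
      (fun n : ℕ =>
        ((starRingEnd ℂ) z * (Real.sqrt (1 - q) : ℝ)) ^ n /
            (qPochC (-α : ℝ) q n * qPochC (q : ℝ) q n) *
          ((Q n (Real.cos θ) : ℝ) : ℂ))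
      ((∏' j : ℕ,
          (1 - (starRingEnd ℂ) z * (Real.sqrt (1 - q) : ℝ) * Complex.exp (θ * I) *
            (q : ℂ) ^ j))⁻¹ *
        ∑' k : ℕ,
          (qPochC ((Real.sqrt α : ℝ) * Complex.exp (θ * I)) q k *
              qPochC (-(Real.sqrt α : ℝ) * Complex.exp (θ * I)) q k) /
            (qPochC (-α : ℝ) q k * qPochC (q : ℝ) q k) *
            ((starRingEnd ℂ) z * (Real.sqrt (1 - q) : ℝ) * Complex.exp (-θ * I)) ^ k) := by
  set W : ℂ := (starRingEnd ℂ) z * (Real.sqrt (1 - q) : ℝ) with hW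
  set u : ℂ := Complex.exp (θ * I) with hu
  set u' : ℂ := Complex.exp (-θ * I) with hu'
  set s : ℂ := ((Real.sqrt α : ℝ) : ℂ) * u with hs
  -- basic facts
  have huu' : u * u' = 1 := by
    rw [hu, hu', ← Complex.exp_add, show ((θ:ℂ)*I + -(θ:ℂ)*I) = 0 from by ring,
      Complex.exp_zero]
  have habsu : Complex.abs u = 1 := by rw [hu]; exact Complex.abs_exp_ofReal_mul_I θ
  have habsu' : Complex.abs u' = 1 := by
    rw [hu', show (-(θ:ℂ) * I) = ((-θ : ℝ) : ℂ) * I from by push_cast; ring]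
    exact Complex.abs_exp_ofReal_mul_I (-θ)
  have habsWu : Complex.abs (W * u) < 1 := by rw [map_mul, habsu, mul_one]; exact hz
  have habsWu' : Complex.abs (W * u') < 1 := by rw [map_mul, habsu', mul_one]; exact hz
  have habss : Complex.abs s = Real.sqrt α := by
    rw [hs, map_mul, habsu, mul_one, Complex.abs_ofReal,
      _root_.abs_of_nonneg (Real.sqrt_nonneg α)]
  have hs2 : s^2 = (α:ℂ) * u^2 := by
    rw [hs, mul_pow, ← Complex.ofReal_pow, sq, Real.mul_self_sqrt hα]
  -- the C sequence
  set Cf : ℕ → ℂ := fun k => qPochC s q k * qPochC (-s) q k with hCf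
  have hC0 : Cf 0 = 1 := by simp [hCf, qPochC_zero]
  have hCrec : ∀ j, Cf (j+1) = Cf j * (1 - (α:ℂ)*(u^2)*(q:ℂ)^(2*j)) := by
    intro j
    rw [hCf]
    simp only
    rw [qPochC_succ s, qPochC_succ (-s)]
    linear_combination (-(qPochC s q j * qPochC (-s) q j * (q:ℂ)^(2*j))) * hs2
      + (qPochC s q j * qPochC (-s) q j * ((q:ℂ)^(2*j) - (q:ℂ)^j * (q:ℂ)^j) * s^2) * (1:ℂ) * 0
      + (qPochC s q j * qPochC (-s) q j) * (s * (q:ℂ)^j) * (s * (q:ℂ)^j) * 0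
  -- 2 cos θ relation
  have hadd : u + u' = 2 * Complex.cos θ := by
    rw [hu, hu', Complex.exp_mul_I, Complex.exp_mul_I, Complex.cos_neg, Complex.sin_neg]
    ring
  have h2x : ((2 * Real.cos θ : ℝ) : ℂ) * u = u^2 + 1 := by
    have : ((2 * Real.cos θ : ℝ) : ℂ) = u + u' := by
      rw [hadd]; push_cast [Complex.ofReal_cos]; ring
    rw [this]
    linear_combination huu'
  have hkey := keylemma hq hq1 hα Q hQ0 hQ1 hQrec (Real.cos θ) u h2x Cf hC0 hCrec
  -- summability
  have hgsum := summable_g_norm hq hq1 (W*u) habsWu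
  have hhsum := summable_h_norm hq hq1 hα s (W*u') habss habsWu'
  have hc := hasSum_sum_range_mul_of_summable_norm hgsum hhsum
  rw [(euler_hasSum hq hq1 (W*u) habsWu).tsum_eq] at hc
  -- per-n identity
  have hfn : (fun n => ∑ k ∈ Finset.range (n+1), ((W*u)^k / pP q k) *
        ((qPochC s q (n-k) * qPochC (-s) q (n-k)) / (dP α q (n-k) * pP q (n-k)) * (W*u')^(n-k)))
      = fun n => W^n / (dP α q n * pP q n) * ((Q n (Real.cos θ) : ℝ) : ℂ) := by
    funext n
    have hterm : ∀ k ∈ Finset.range (n+1), ((W*u)^k / pP q k) *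
        ((qPochC s q (n-k) * qPochC (-s) q (n-k)) / (dP α q (n-k) * pP q (n-k)) * (W*u')^(n-k))
        = (W^n * u'^n / (dP α q n * pP q n)) * aaF q α (u^2) Cf n k := by
      intro k hk
      have hk' : k ≤ n := by have := Finset.mem_range.mp hk; omega
      obtain ⟨m, rfl⟩ : ∃ m, n = m + k := ⟨n - k, (Nat.sub_add_cancel hk').symm⟩
      rw [aaF, Nat.add_sub_cancel]
      have hpow2 : (W*u)^k * ((W*u')^m) = W^(m+k) * (u'^(m+k) * (u^2)^k) := by
        have h1 : (u*u')^k = 1 := by rw [huu']; exact one_pow k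
        have hpow : u'^(m+k) * (u^2)^k = u^k * u'^m := by
          calc u'^(m+k) * (u^2)^k = u'^m * (u*u')^k * u^k := by ring
            _ = u^k * u'^m := by rw [h1]; ring
        rw [mul_pow, mul_pow]
        linear_combination (-(W:ℂ)^(m+k)) * hpow
      have h1 := pP_ne hq.le hq1 (q := q) k
      have h2 := pP_ne hq.le hq1 (q := q) m
      have h3 := dP_ne hq.le hα (q := q) (α := α) m
      have h4 := pP_ne hq.le hq1 (q := q) (m+k)
      have h5 := dP_ne hq.le hα (q := q) (α := α) (m+k)
      field_simp
      linear_combination (qPochC s q m * qPochC (-s) q m) * hpow2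
    rw [Finset.sum_congr rfl hterm, ← Finset.mul_sum, ← hkey n]
    have h6 := pP_ne hq.le hq1 (q := q) n
    have h7 := dP_ne hq.le hα (q := q) (α := α) n
    have h8 : u^n * u'^n = 1 := by rw [← mul_pow, huu', one_pow]
    field_simp
    linear_combination (((Q n (Real.cos θ) : ℝ) : ℂ) * W^n) * h8
  rw [hfn] at hc
  have hneg : (-(Real.sqrt α : ℝ) : ℂ) * u = -s := by rw [hs]; ring
  simp only [hneg]
  exact hc
end
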